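/- Let G be a group acting continuously and minimally on a compact metric space X, and m ≥ 2. Then (X,G) is m-equicontinuous if and only if every m-regionally proximal tuple (x₁,…,x_m) ∈ Q_m(X,G) has two equal coordinates, i.e., Q_m(X,G) ⊆ Δ^(m)(X). -/

import Mathlib

open Metric

/-- `x` is an `m`-equicontinuity point for the action of `G` on `X`. -/
def IsEqPoint (G : Type*) {X : Type*} [Group G] [MetricSpace X] [MulAction G X]
    (m : ℕ) (x : X) : Prop :=
  ∀ ε > (0:ℝ), ∃ δ > (0:ℝ), ∀ xs : Fin m → X, (∀ i, dist (xs i) x < δ) →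
    ∀ g : G, ∃ i j, i ≠ j ∧ dist (g • xs i) (g • xs j) < ε

/-- `(x₁,…,x_m)` is an `m`-regionally proximal tuple. -/
def RegProxTuple (G : Type*) {X : Type*} [Group G] [MetricSpace X] [MulAction G X]
    (m : ℕ) (x : Fin m → X) : Prop :=
  ∀ ε > (0:ℝ), ∃ x' : Fin m → X, (∀ i, dist (x i) (x' i) < ε) ∧
    ∃ g : G, ∀ i j, dist (g • x' i) (g • x' j) < ε

/-- Uniform version of `m`-equicontinuity, obtained by compactness. -/
theorem uniform_of_eqPoints {G X : Type*} [Group G]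
    [MetricSpace X] [CompactSpace X] [MulAction G X]
    (m : ℕ) (H : ∀ x : X, IsEqPoint G m x) :
    ∀ ε > (0:ℝ), ∃ δ > (0:ℝ), ∀ z : X, ∀ xs : Fin m → X, (∀ i, dist (xs i) z < δ) →
      ∀ g : G, ∃ i j, i ≠ j ∧ dist (g • xs i) (g • xs j) < ε := by
  intro ε hε
  rcases isEmpty_or_nonempty X with hX | hX
  · exact ⟨1, one_pos, fun z => (IsEmpty.false z).elim⟩
  choose δf hδf hδf2 using fun y : X => H y ε hε
  have hcov : (Set.univ : Set X) ⊆ ⋃ y : X, ball y (δf y / 2) := fun z _ =>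
    Set.mem_iUnion.mpr ⟨z, mem_ball_self (half_pos (hδf z))⟩
  obtain ⟨t, ht⟩ := isCompact_univ.elim_finite_subcover
    (fun y : X => ball y (δf y / 2)) (fun y => isOpen_ball) hcov
  have htne : t.Nonempty := by
    obtain ⟨x0⟩ := hX
    have := ht (Set.mem_univ x0)
    simp only [Set.mem_iUnion] at this
    obtain ⟨y, hy, -⟩ := this
    exact ⟨y, hy⟩
  refine ⟨t.inf' htne (fun y => δf y / 2), ?_, ?_⟩
  · rw [gt_iff_lt, Finset.lt_inf'_iff]
    exact fun y _ => half_pos (hδf y)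
  · intro z xs hxs g
    have := ht (Set.mem_univ z)
    simp only [Set.mem_iUnion] at this
    obtain ⟨y, hy, hzy⟩ := this
    refine hδf2 y xs (fun i => ?_) g
    have h1 : dist (xs i) z < δf y / 2 :=
      lt_of_lt_of_le (hxs i) (Finset.inf'_le _ hy)
    have h2 : dist z y < δf y / 2 := mem_ball.mp hzy
    calc dist (xs i) y ≤ dist (xs i) z + dist z y := dist_triangle _ _ _
      _ < δf y / 2 + δf y / 2 := by linarith
      _ = δf y := by ring

/-- A minimal action is `m`-equicontinuous iff every `m`-regionally proximal tuple
has two equal coordinates. -/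
theorem mEquicontinuous_iff_regProxTuple_diag {G X : Type*} [Group G] [TopologicalSpace G]
    [MetricSpace X] [CompactSpace X] [MulAction G X] [ContinuousSMul G X]
    [MulAction.IsMinimal G X] (m : ℕ) (hm : 2 ≤ m) :
    (∀ x : X, IsEqPoint G m x) ↔
      ∀ x : Fin m → X, RegProxTuple G m x → ∃ i j, i ≠ j ∧ x i = x j := by
  have hm0 : 0 < m := by omega
  constructor
  · -- equicontinuity ⇒ regionally proximal tuples are degenerate
    intro H x hx
    by_contra hne
    push_neg at hne
    -- minimal gap between distinct coordinates
    set P : Finset (Fin m × Fin m) := Finset.univ.filter (fun p => p.1 ≠ p.2) with hP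
    have hPne : P.Nonempty := by
      refine ⟨(⟨0, by omega⟩, ⟨1, by omega⟩), Finset.mem_filter.mpr ⟨Finset.mem_univ _, ?_⟩⟩
      simp [Fin.ext_iff]
    set D : ℝ := P.inf' hPne (fun p => dist (x p.1) (x p.2)) with hD
    have hDpos : 0 < D := by
      rw [hD, Finset.lt_inf'_iff]
      intro p hp
      have : p.1 ≠ p.2 := (Finset.mem_filter.mp hp).2
      exact dist_pos.mpr (hne p.1 p.2 this)
    obtain ⟨δ, hδ, hkey⟩ := uniform_of_eqPoints (G := G) m H (D / 3) (by linarith)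
    have hε1 : (0:ℝ) < min δ (D / 3) := lt_min hδ (by linarith)
    obtain ⟨x', hx', g, hg⟩ := hx (min δ (D / 3)) hε1
    set i0 : Fin m := ⟨0, hm0⟩
    obtain ⟨i, j, hij, hd⟩ := hkey (g • x' i0) (fun i => g • x' i)
      (fun i => lt_of_lt_of_le (hg i i0) (min_le_left _ _)) g⁻¹
    simp only [inv_smul_smul] at hd
    have h1 : dist (x i) (x' i) < D / 3 := lt_of_lt_of_le (hx' i) (min_le_right _ _)
    have h2 : dist (x j) (x' j) < D / 3 := lt_of_lt_of_le (hx' j) (min_le_right _ _)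
    have hmem : (i, j) ∈ P := Finset.mem_filter.mpr ⟨Finset.mem_univ _, hij⟩
    have hDle : D ≤ dist (x i) (x j) := Finset.inf'_le _ hmem
    have htr : dist (x i) (x j) ≤ dist (x i) (x' i) + dist (x' i) (x' j) + dist (x' j) (x j) :=
      dist_triangle4 _ _ _ _
    rw [dist_comm (x' j) (x j)] at htr
    linarith
  · -- degenerate regionally proximal tuples ⇒ equicontinuity
    intro H x
    intro ε hε
    by_contra h
    push_neg at h
    have h' : ∀ n : ℕ, ∃ xs : Fin m → X, (∀ i, dist (xs i) x < 1 / (n + 1)) ∧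
        ∃ g : G, ∀ i j, i ≠ j → ε ≤ dist (g • xs i) (g • xs j) := by
      intro n
      exact h (1 / (n + 1)) (by positivity)
    choose xs hxs g hg using h'
    set u : ℕ → (Fin m → X) := fun n i => g n • xs n i with hu
    obtain ⟨y, -, φ, hφ, hty⟩ := isCompact_univ.tendsto_subseq (x := u) (fun n => Set.mem_univ _)
    have hco : ∀ i, Filter.Tendsto (fun n => u (φ n) i) Filter.atTop (nhds (y i)) := by
      intro i
      exact (tendsto_pi_nhds.mp hty i)
    have hreg : RegProxTuple G m y := by
      intro ε' hε'
      obtain ⟨N0, hN0⟩ := (Metric.tendsto_atTop.mp hty) ε' hε'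
      obtain ⟨N1, hN1⟩ := exists_nat_one_div_lt (half_pos hε')
      set N := max N0 N1
      refine ⟨u (φ N), fun i => ?_, (g (φ N))⁻¹, fun i j => ?_⟩
      · calc dist (y i) (u (φ N) i) ≤ dist y (u (φ N)) := dist_le_pi_dist _ _ _
          _ = dist ((u ∘ φ) N) y := dist_comm _ _
          _ < ε' := hN0 N (le_max_left _ _)
      · have hinv : ∀ k, (g (φ N))⁻¹ • u (φ N) k = xs (φ N) k := fun k => by
          simp [hu, inv_smul_smul]
        rw [hinv i, hinv j]
        have hle : (1 : ℝ) / (φ N + 1) ≤ 1 / (N1 + 1) := by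
          apply one_div_le_one_div_of_le (by positivity)
          have : N1 ≤ φ N := le_trans (le_max_right N0 N1) (hφ.le_apply)
          exact_mod_cast by exact_mod_cast add_le_add_left (Nat.cast_le.mpr this : (N1:ℝ) ≤ φ N) 1
        have hi := hxs (φ N) i
        have hj := hxs (φ N) j
        calc dist (xs (φ N) i) (xs (φ N) j)
            ≤ dist (xs (φ N) i) x + dist x (xs (φ N) j) := dist_triangle _ _ _
          _ < 1 / (φ N + 1) + 1 / (φ N + 1) := by
              rw [dist_comm x]
              exact add_lt_add hi hj
          _ ≤ 1 / (N1 + 1) + 1 / (N1 + 1) := add_le_add hle hle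
          _ < ε' / 2 + ε' / 2 := add_lt_add hN1 hN1
          _ = ε' := by ring
    obtain ⟨i, j, hij, heq⟩ := H y hreg
    have hlim : ε ≤ dist (y i) (y j) :=
      ge_of_tendsto' ((hco i).dist (hco j)) (fun n => hg (φ n) i j hij)
    rw [heq, dist_self] at hlim
    linarith
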